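/- arXiv:1607.06865 — 6 statements merged into one kernel-verified Lean document; each statement's English description precedes it below -/
import Mathlib

section
/- Let T be a tree in which every leaf is a terminal (member of a set U of vertices of T) and every internal vertex has degree at least 3. Then for any integer s ≥ 3, the number of vertices of T with degree at least s is at most floor((|U|-2)/(s-2)). -/
lemma aux_deg_pos {V : Type*} [Fintype V] (G : SimpleGraph V) [DecidableRel G.Adj]
    (hc : G.Connected) (h2 : 1 < Fintype.card V) (v : V) : 0 < G.degree v := by
  rw [G.degree_pos_iff_exists_adj]
  obtain ⟨w, hw⟩ := Fintype.exists_ne_of_one_lt_card h2 v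
  obtain ⟨p⟩ := hc.preconnected v w
  cases p with
  | nil => exact absurd rfl hw
  | cons h _ => exact ⟨_, h⟩

/-- Let `T` be a tree in which every leaf is a terminal (member of `U`) and every
internal vertex has degree at least 3.  Then for any integer `s ≥ 3`, the number of
vertices of `T` with degree at least `s` is at most `⌊(|U|-2)/(s-2)⌋`. -/
theorem stmt1 {V : Type*} [Fintype V] (G : SimpleGraph V) [DecidableRel G.Adj]
    (hT : G.IsTree) (U : Finset V)
    (hleaf : ∀ v : V, G.degree v = 1 → v ∈ U)
    (hinternal : ∀ v : V, 2 ≤ G.degree v → 3 ≤ G.degree v)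
    (s : ℕ) (hs : 3 ≤ s) (hU : 2 ≤ U.card) :
    (Finset.univ.filter (fun v : V => s ≤ G.degree v)).card ≤ (U.card - 2) / (s - 2) := by
  classical
  set B := Finset.univ.filter (fun v : V => s ≤ G.degree v) with hB
  rcases B.eq_empty_or_nonempty with hBe | ⟨v0, hv0⟩
  · simp [hBe]
  · have hv0' : s ≤ G.degree v0 := by
      simpa [hB] using (Finset.mem_filter.mp hv0).2
    -- card V ≥ 2
    have hdeg0 : 0 < G.degree v0 := by omega
    obtain ⟨w0, hw0⟩ := G.degree_pos_iff_exists_adj v0 |>.mp hdeg0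
    have h2 : 1 < Fintype.card V := Fintype.one_lt_card_iff.mpr ⟨v0, w0, G.ne_of_adj hw0⟩
    have hdegpos : ∀ v : V, 0 < G.degree v := aux_deg_pos G hT.isConnected h2
    -- degree sum
    have hsum : ∑ v : V, G.degree v = 2 * G.edgeFinset.card :=
      G.sum_degrees_eq_twice_card_edges
    have hedge : G.edgeFinset.card + 1 = Fintype.card V := hT.card_edgeFinset
    have hsumZ : ∑ v : V, ((G.degree v : ℤ) - 2) = -2 := by
      have : ∑ v : V, ((G.degree v : ℤ) - 2)
          = (∑ v : V, (G.degree v : ℤ)) - 2 * Fintype.card V := by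
        rw [Finset.sum_sub_distrib]
        simp [Finset.card_univ, mul_comm]
      rw [this]
      have : (∑ v : V, (G.degree v : ℤ)) = 2 * G.edgeFinset.card := by
        exact_mod_cast congrArg (Nat.cast : ℕ → ℤ) hsum
      rw [this]
      have : (Fintype.card V : ℤ) = G.edgeFinset.card + 1 := by exact_mod_cast hedge.symm
      rw [this]; ring
    -- split into leaves and internal
    set L := Finset.univ.filter (fun v : V => G.degree v = 1) with hL
    set I := Finset.univ.filter (fun v : V => 2 ≤ G.degree v) with hI
    have hsplit : (Finset.univ : Finset V) = L ∪ I := by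
      ext v
      simp only [hL, hI, Finset.mem_union, Finset.mem_filter, Finset.mem_univ, true_and]
      have := hdegpos v
      constructor
      · intro _; omega
      · intro _; trivial
    have hdisj : Disjoint L I := by
      rw [Finset.disjoint_left]
      intro v hvL hvI
      simp only [hL, hI, Finset.mem_filter] at hvL hvI
      omega
    have hsumI : ∑ v ∈ I, ((G.degree v : ℤ) - 2) = (L.card : ℤ) - 2 := by
      have := hsumZ
      rw [hsplit, Finset.sum_union hdisj] at this
      have hLsum : ∑ v ∈ L, ((G.degree v : ℤ) - 2) = -(L.card : ℤ) := by
        have : ∀ v ∈ L, ((G.degree v : ℤ) - 2) = -1 := by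
          intro v hv
          simp only [hL, Finset.mem_filter] at hv
          rw [hv.2]; norm_num
        rw [Finset.sum_congr rfl this, Finset.sum_const]
        simp
      rw [hLsum] at this
      linarith
    have hBI : B ⊆ I := by
      intro v hv
      simp only [hB, Finset.mem_filter] at hv
      simp only [hI, Finset.mem_filter, Finset.mem_univ, true_and]
      omega
    have hlower : (B.card : ℤ) * ((s : ℤ) - 2) ≤ ∑ v ∈ I, ((G.degree v : ℤ) - 2) := by
      calc (B.card : ℤ) * ((s : ℤ) - 2) = ∑ _v ∈ B, ((s : ℤ) - 2) := by
            rw [Finset.sum_const]; ring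
        _ ≤ ∑ v ∈ B, ((G.degree v : ℤ) - 2) := by
            apply Finset.sum_le_sum
            intro v hv
            simp only [hB, Finset.mem_filter] at hv
            have := hv.2
            have : (s : ℤ) ≤ (G.degree v : ℤ) := by exact_mod_cast this
            linarith
        _ ≤ ∑ v ∈ I, ((G.degree v : ℤ) - 2) := by
            apply Finset.sum_le_sum_of_subset_of_nonneg hBI
            intro v hv _
            simp only [hI, Finset.mem_filter] at hv
            have := hinternal v hv.2
            have : (3 : ℤ) ≤ (G.degree v : ℤ) := by exact_mod_cast this
            linarith
    have hLU : L ⊆ U := by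
      intro v hv
      simp only [hL, Finset.mem_filter] at hv
      exact hleaf v hv.2
    have hLcard : (L.card : ℤ) ≤ U.card := by
      exact_mod_cast Finset.card_le_card hLU
    have hkey : (B.card : ℤ) * ((s : ℤ) - 2) ≤ (U.card : ℤ) - 2 := by
      rw [hsumI] at hlower; linarith
    rw [Nat.le_div_iff_mul_le (by omega : 0 < s - 2)]
    have h1 : ((s - 2 : ℕ) : ℤ) = (s : ℤ) - 2 := by omega
    have h2' : ((U.card - 2 : ℕ) : ℤ) = (U.card : ℤ) - 2 := by omega
    have : (B.card : ℤ) * ((s - 2 : ℕ) : ℤ) ≤ ((U.card - 2 : ℕ) : ℤ) := by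
      rw [h1, h2']; exact hkey
    exact_mod_cast this
end

section
/- Let T be a tree in which every leaf is a terminal and every internal vertex has degree at least 3. Then for any integer s ≥ 3, the number of terminal vertices (members of U) having degree at least s in T is at most floor((|U|-2)/(s-1)). -/
/-- Let `T` be a tree in which every leaf is a terminal and every internal vertex has
degree at least 3.  Then for any integer `s ≥ 3`, the number of terminal vertices
(members of `U`) having degree at least `s` in `T` is at most `⌊(|U|-2)/(s-1)⌋`. -/
theorem stmt2 {V : Type*} [Fintype V] [DecidableEq V] (G : SimpleGraph V) [DecidableRel G.Adj]
    (hT : G.IsTree) (U : Finset V)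
    (hleaf : ∀ v : V, G.degree v = 1 → v ∈ U)
    (hinternal : ∀ v : V, 2 ≤ G.degree v → 3 ≤ G.degree v)
    (s : ℕ) (hs : 3 ≤ s) (hU : 2 ≤ U.card) :
    (U.filter (fun v : V => s ≤ G.degree v)).card ≤ (U.card - 2) / (s - 1) := by
  classical
  rcases (U.filter (fun v : V => s ≤ G.degree v)).eq_empty_or_nonempty with hA | hA
  · simp [hA]
  set A : Finset V := U.filter (fun v : V => s ≤ G.degree v) with hAdef
  set L : Finset V := Finset.univ.filter (fun v : V => G.degree v = 1) with hLdef
  set I : Finset V := Finset.univ.filter (fun v : V => 2 ≤ G.degree v) with hIdef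
  obtain ⟨v0, hv0⟩ := hA
  have hv0deg : s ≤ G.degree v0 := (Finset.mem_filter.mp hv0).2
  have hn : 2 ≤ Fintype.card V := by
    have := G.degree_lt_card_verts v0
    omega
  -- every vertex has positive degree
  have hdegpos : ∀ w : V, 1 ≤ G.degree w := by
    intro w
    obtain ⟨u, hu⟩ := Fintype.exists_ne_of_one_lt_card (by omega) w
    obtain ⟨p⟩ := hT.isConnected.preconnected w u
    have hnil : ¬ p.Nil := SimpleGraph.Walk.not_nil_of_ne (Ne.symm hu)
    rw [SimpleGraph.Walk.not_nil_iff] at hnil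
    obtain ⟨x, hx, -, -⟩ := hnil
    have : 0 < G.degree w := (G.degree_pos_iff_exists_adj w).mpr ⟨x, hx⟩
    omega
  -- handshake
  have hsum : ∑ w : V, G.degree w + 2 = 2 * Fintype.card V := by
    rw [G.sum_degrees_eq_twice_card_edges]
    have := hT.card_edgeFinset
    omega
  -- split sum over L and I
  have hLI : Disjoint L I := by
    rw [Finset.disjoint_filter]
    intro x _ hx1 hx2
    omega
  have hunion : L ∪ I = Finset.univ := by
    ext x
    simp only [hLdef, hIdef, Finset.mem_union, Finset.mem_filter, Finset.mem_univ, true_and,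
      iff_true]
    have := hdegpos x
    omega
  have hsplit : ∑ w ∈ L, G.degree w + ∑ w ∈ I, G.degree w = ∑ w : V, G.degree w := by
    rw [← Finset.sum_union hLI, hunion]
  have hLsum : ∑ w ∈ L, G.degree w = L.card := by
    rw [Finset.sum_congr rfl (fun x hx => (Finset.mem_filter.mp hx).2)]
    simp [hLdef]
  have hAI : A ⊆ I := by
    intro x hx
    simp only [hIdef, Finset.mem_filter, Finset.mem_univ, true_and]
    have := (Finset.mem_filter.mp hx).2
    omega
  have hIsum : A.card * s + 2 * (I.card - A.card) ≤ ∑ w ∈ I, G.degree w := by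
    rw [← Finset.sum_sdiff hAI]
    have h1 : A.card * s ≤ ∑ w ∈ A, G.degree w := by
      calc A.card * s = ∑ _w ∈ A, s := by rw [Finset.sum_const, smul_eq_mul]
        _ ≤ ∑ w ∈ A, G.degree w :=
          Finset.sum_le_sum (fun x hx => (Finset.mem_filter.mp hx).2)
    have h2 : 2 * (I.card - A.card) ≤ ∑ w ∈ I \ A, G.degree w := by
      have hcard : (I \ A).card = I.card - A.card := Finset.card_sdiff_of_subset hAI
      calc 2 * (I.card - A.card) = ∑ _w ∈ I \ A, 2 := by
            rw [Finset.sum_const, smul_eq_mul, hcard]; ring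
        _ ≤ ∑ w ∈ I \ A, G.degree w := by
            refine Finset.sum_le_sum (fun x hx => ?_)
            exact (Finset.mem_filter.mp (Finset.mem_sdiff.mp hx).1).2
    omega
  -- L and A are disjoint subsets of U
  have hLU : L ⊆ U := fun x hx => hleaf x (Finset.mem_filter.mp hx).2
  have hAU : A ⊆ U := Finset.filter_subset _ _
  have hLA : Disjoint L A := by
    refine Finset.disjoint_left.mpr fun x hxL hxA => ?_
    have h1 := (Finset.mem_filter.mp hxL).2
    have h2 := (Finset.mem_filter.mp hxA).2
    omega
  have hcardU : L.card + A.card ≤ U.card := by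
    rw [← Finset.card_union_of_disjoint hLA]
    exact Finset.card_le_card (Finset.union_subset hLU hAU)
  have hLIcard : L.card + I.card = Fintype.card V := by
    rw [← Finset.card_union_of_disjoint hLI, hunion, Finset.card_univ]
  have hAIcard : A.card ≤ I.card := Finset.card_le_card hAI
  -- conclude
  rw [Nat.le_div_iff_mul_le (by omega : 0 < s - 1)]
  have hmul : A.card * (s - 1) = A.card * s - A.card := by
    cases s with
    | zero => omega
    | succ t => simp [Nat.mul_succ]
  rw [hmul]
  have hms : 3 * A.card ≤ A.card * s := by
    calc 3 * A.card = A.card * 3 := by ring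
      _ ≤ A.card * s := Nat.mul_le_mul_left _ hs
  set M := A.card * s with hM
  omega
end

section
/- Let L = (v_1, ..., v_r) be a list of distinct vertices, d ≥ 1 an integer, and Λ_d(L) the graph on {v_1,...,v_r} with edges {v_i, v_j} whenever |i - j| ≤ d+1. If D is any set of at most d vertices, then the subgraph of Λ_d(L) induced on the undeleted vertices {v_1,...,v_r} \ D is connected (provided it is nonempty). -/
/-- The `d`-adjacency graph on list positions `0, …, r-1`: positions at distance at
most `d+1` are adjacent. -/
def adjGraph (r d : ℕ) : SimpleGraph (Fin r) where
  Adj i j := i ≠ j ∧ Nat.dist i.val j.val ≤ d + 1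
  symm := ⟨fun i j h => ⟨h.1.symm, by rw [Nat.dist_comm]; exact h.2⟩⟩
  loopless := ⟨fun i h => h.1 rfl⟩

lemma stmt4_aux (r d : ℕ) (D : Finset (Fin r)) (hD : D.card ≤ d) :
    ∀ n (i j : Fin r) (hi : i ∉ D) (hj : j ∉ D), i.val ≤ j.val → j.val - i.val ≤ n →
    ((adjGraph r d).induce {v : Fin r | v ∉ D}).Reachable ⟨i, hi⟩ ⟨j, hj⟩ := by
  intro n
  induction n using Nat.strong_induction_on with
  | _ n IH =>
    intro i j hi hj hij hn
    by_cases heq : i = j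
    · subst heq; exact SimpleGraph.Reachable.refl _
    · have hlt : i.val < j.val := lt_of_le_of_ne hij (fun h => heq (Fin.ext h))
      by_cases hclose : j.val ≤ i.val + (d + 1)
      · refine SimpleGraph.Adj.reachable ?_
        show (adjGraph r d).Adj i j
        refine ⟨heq, ?_⟩
        rw [Nat.dist_eq_sub_of_le hij]
        omega
      · -- find an undeleted k with i < k ≤ i + d + 1
        have hkr : ∀ m ∈ Finset.Ioc i.val (i.val + d + 1), m < r := by
          intro m hm
          simp only [Finset.mem_Ioc] at hm
          have := j.isLt
          omega
        set S : Finset (Fin r) := (Finset.Ioc i.val (i.val + d + 1)).attachFin hkr with hS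
        have hScard : S.card = d + 1 := by
          rw [hS, Finset.card_attachFin, Nat.card_Ioc]; omega
        have hcard : D.card < S.card := by omega
        have hns : ¬ S ⊆ D := fun h => absurd (Finset.card_le_card h) (by omega)
        obtain ⟨k, hkS, hkD⟩ := Finset.not_subset.mp hns
        have hk : i.val < k.val ∧ k.val ≤ i.val + d + 1 := by
          rw [hS, Finset.mem_attachFin, Finset.mem_Ioc] at hkS
          exact hkS
        have hadj : (adjGraph r d).Adj i k := by
          refine ⟨fun h => absurd (congrArg Fin.val h) (by omega), ?_⟩
          rw [Nat.dist_eq_sub_of_le (le_of_lt hk.1)]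
          omega
        have step : ((adjGraph r d).induce {v : Fin r | v ∉ D}).Adj ⟨i, hi⟩ ⟨k, hkD⟩ := hadj
        refine (SimpleGraph.Adj.reachable step).trans ?_
        exact IH (j.val - k.val) (by omega) k j hkD hj (by omega) (le_refl _)

/-- If a set `D` of at most `d` vertices is deleted from the `d`-adjacency graph
`Λ_d(L)` of a list of `r` distinct vertices, then the subgraph induced on the
remaining (undeleted) vertices is connected, provided it is nonempty. -/
theorem stmt4 (r d : ℕ) (hd : 1 ≤ d) (D : Finset (Fin r)) (hD : D.card ≤ d)
    (hne : ∃ v : Fin r, v ∉ D) :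
    ((adjGraph r d).induce {v : Fin r | v ∉ D}).Connected := by
  obtain ⟨v, hv⟩ := hne
  rw [SimpleGraph.connected_iff]
  refine ⟨?_, ⟨⟨v, hv⟩⟩⟩
  rintro ⟨a, ha⟩ ⟨b, hb⟩
  rcases le_total a.val b.val with h | h
  · exact stmt4_aux r d D hD _ a b ha hb h (le_refl _)
  · exact (stmt4_aux r d D hD _ b a hb ha h (le_refl _)).symm
end

section
/- Let T be a tree and Euler(T) the sequence of vertices of T listed by first appearance in an Euler tour of T. Removing f edges from T splits Euler(T) into at most 2f+1 maximal contiguous intervals such that the vertex set of each connected subtree of T minus the removed edges is a union of some of these intervals. -/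
open Classical

/-- Number of adjacent pairs in a list that are NOT related by `R`. -/
noncomputable def chg {α : Type*} (R : α → α → Prop) : List α → ℕ
  | [] => 0
  | [_] => 0
  | a :: b :: l => (if R a b then 0 else 1) + chg R (b :: l)

lemma chg_le_cons {α : Type*} (R : α → α → Prop) (a : α) (l : List α) :
    chg R l ≤ chg R (a :: l) := by
  cases l with
  | nil => simp [chg]
  | cons b t => exact Nat.le_add_left _ _

lemma chg_cons_cons_le {α : Type*} {R : α → α → Prop} (hR : Transitive R)
    (x a : α) (l : List α) : chg R (x :: l) ≤ chg R (x :: a :: l) := by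
  cases l with
  | nil => simp [chg]
  | cons b t =>
    show (if R x b then 0 else 1) + chg R (b :: t) ≤
      (if R x a then 0 else 1) + ((if R a b then 0 else 1) + chg R (b :: t))
    have key : (if R x b then 0 else 1) ≤
        (if R x a then 0 else 1) + (if R a b then 0 else 1) := by
      by_cases h3 : R x b
      · simp [h3]
      · rw [if_neg h3]
        by_cases h1 : R x a
        · rw [if_pos h1, if_neg (fun h2 => h3 (hR h1 h2))]
        · rw [if_neg h1]; exact Nat.le_add_right 1 _
    calc (if R x b then 0 else 1) + chg R (b :: t)
        ≤ ((if R x a then 0 else 1) + (if R a b then 0 else 1)) + chg R (b :: t) :=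
          Nat.add_le_add_right key _
      _ = _ := by ring

lemma chg_sublist {α : Type*} {R : α → α → Prop} (hR : Transitive R)
    {D S : List α} (h : D.Sublist S) :
    chg R D ≤ chg R S ∧ ∀ x, chg R (x :: D) ≤ chg R (x :: S) := by
  induction h with
  | slnil => exact ⟨le_refl _, fun _ => le_refl _⟩
  | @cons l₁ l₂ a h ih =>
    refine ⟨ih.1.trans (chg_le_cons R a _), fun x => (ih.2 x).trans ?_⟩
    exact chg_cons_cons_le hR x a l₂
  | @cons_cons l₁ l₂ a h ih =>
    refine ⟨ih.2 a, fun x => ?_⟩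
    show (if R x a then 0 else 1) + chg R (a :: l₁) ≤
      (if R x a then 0 else 1) + chg R (a :: l₂)
    exact Nat.add_le_add_left (ih.2 a) _

lemma chg_support_le {V : Type*} [DecidableEq V] (G : SimpleGraph V)
    (F : Finset (Sym2 V)) {u v : V} (p : G.Walk u v) :
    chg (G.deleteEdges ↑F).Reachable p.support ≤ p.edges.countP (fun e => e ∈ F) := by
  induction p with
  | nil => simp [chg]
  | @cons u v w h p ih =>
    rw [SimpleGraph.Walk.support_cons, SimpleGraph.Walk.edges_cons, List.countP_cons]
    have hsup : p.support = v :: p.support.tail := p.support_eq_cons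
    rw [hsup]
    show (if (G.deleteEdges ↑F).Reachable u v then 0 else 1) + chg _ (v :: p.support.tail)
      ≤ _
    rw [← hsup]
    by_cases hmem : s(u, v) ∈ F
    · have hite : (if decide (s(u, v) ∈ F) = true then 1 else 0) = 1 := by
        simp [hmem]
      rw [hite]
      have hb : (if (G.deleteEdges ↑F).Reachable u v then 0 else 1) ≤ 1 := by
        split <;> omega
      omega
    · have hreach : (G.deleteEdges ↑F).Reachable u v := by
        exact SimpleGraph.Adj.reachable
          (by rw [SimpleGraph.deleteEdges_adj]; exact ⟨h, by simpa using hmem⟩)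
      have hite : (if decide (s(u, v) ∈ F) = true then 1 else 0) = 0 := by
        simp [hmem]
      rw [hite, if_pos hreach]
      omega

lemma countP_mem_finset {α : Type*} [DecidableEq α] (F : Finset α) (l : List α) :
    l.countP (fun e => e ∈ F) = ∑ e ∈ F, l.count e := by
  induction l with
  | nil => simp
  | cons a t ih =>
    rw [List.countP_cons]
    have hc : ∀ e : α, (a :: t).count e = t.count e + if a = e then 1 else 0 := by
      intro e
      by_cases h : a = e
      · subst h; simp [List.count_cons]
      · simp [List.count_cons, h, Ne.symm h]
    rw [Finset.sum_congr rfl (fun e _ => hc e), Finset.sum_add_distrib, ← ih,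
      Finset.sum_ite_eq F a (fun _ => 1)]
    by_cases h : a ∈ F <;> simp [h]

lemma sum_eq_chg {α : Type*} (R : α → α → Prop) (d : α) (l : List α) :
    ∑ i ∈ Finset.range (l.length - 1),
      (if ¬ R (l.getD i d) (l.getD (i + 1) d) then 1 else 0) = chg R l := by
  induction l with
  | nil => simp [chg]
  | cons a t ih =>
    cases t with
    | nil => simp; rfl
    | cons b t' =>
      have hlen : (a :: b :: t').length - 1 = ((b :: t').length - 1) + 1 := by
        simp
      rw [hlen, Finset.sum_range_succ']
      have h0 : ∀ i : ℕ, (a :: b :: t').getD (i + 1) d = (b :: t').getD i d := by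
        intro i; rfl
      simp only [h0]
      rw [ih]
      show chg R (b :: t') + (if ¬ R a b then 1 else 0)
        = (if R a b then 0 else 1) + chg R (b :: t')
      by_cases h : R a b <;> simp [h, Nat.add_comm]

/-- Let `T` be a tree and `Euler(T)` the sequence of vertices of `T` listed by first
appearance in an Euler tour (a closed walk using every edge exactly twice).  Removing
`f` edges from `T` splits `Euler(T)` into at most `2f+1` maximal contiguous intervals
such that the vertex set of each connected subtree of `T` minus the removed edges is a
union of some of these intervals: equivalently, the number of positions at which the
connected component changes between consecutive entries of `Euler(T)` is at most `2f`. -/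
theorem stmt7 {V : Type*} [Fintype V] [DecidableEq V] (G : SimpleGraph V)
    (hT : G.IsTree) (r : V) (w : G.Walk r r)
    (hEuler : ∀ e ∈ G.edgeSet, w.edges.count e = 2)
    (F : Finset (Sym2 V)) (hF : ↑F ⊆ G.edgeSet) (f : ℕ) (hf : F.card = f) :
    {i : ℕ | i + 1 < w.support.dedup.length ∧
        ¬ (G.deleteEdges ↑F).Reachable (w.support.dedup.getD i r)
            (w.support.dedup.getD (i + 1) r)}.ncard ≤ 2 * f := by
  set R := (G.deleteEdges ↑F).Reachable with hR
  set L := w.support.dedup with hL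
  have hset : {i : ℕ | i + 1 < L.length ∧ ¬ R (L.getD i r) (L.getD (i + 1) r)} =
      ↑((Finset.range (L.length - 1)).filter
        (fun i => ¬ R (L.getD i r) (L.getD (i + 1) r))) := by
    ext i
    simp only [Set.mem_setOf_eq, Finset.coe_filter, Finset.mem_range]
    constructor
    · rintro ⟨h1, h2⟩; exact ⟨by omega, h2⟩
    · rintro ⟨h1, h2⟩; exact ⟨by omega, h2⟩
  rw [hset, Set.ncard_coe_finset, Finset.card_filter]
  have hbridge : (∑ i ∈ Finset.range (L.length - 1),
      if ¬ R (L.getD i r) (L.getD (i + 1) r) then 1 else 0) = chg R L := by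
    rw [← sum_eq_chg R r L]
    exact Finset.sum_congr rfl fun i _ => by congr!
  rw [hbridge]
  have htrans : Transitive R := fun a b c hab hbc => hab.trans hbc
  have h1 : chg R L ≤ chg R w.support :=
    (chg_sublist htrans (List.dedup_sublist _)).1
  have h2 : chg R w.support ≤ w.edges.countP (fun e => e ∈ F) :=
    chg_support_le G F w
  have h3 : w.edges.countP (fun e => e ∈ F) = 2 * f := by
    rw [countP_mem_finset]
    have hcnt : ∀ e ∈ F, w.edges.count e = 2 := fun e he => hEuler e (hF he)
    rw [Finset.sum_congr rfl hcnt, Finset.sum_const, hf, smul_eq_mul, mul_comm]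
  omega
end

section
/- Let E' be a nonempty finite set of edges, and suppose each edge is independently included in a random subset E_i with probability 2^{-i}, where i = floor(log₂ |E'|). Then the probability that exactly one edge of E' lies in E_i is at least a positive absolute constant (in fact at least 1/(2e)). -/
private lemma stmt10_aux (m N : ℕ) (hm2 : 2 ≤ m) (hmN : m ≤ N) (hN2m : N ≤ 2 * m - 1) :
    1 / (2 * Real.exp 1) ≤ (N : ℝ) * (1 / (m : ℝ)) * (1 - 1 / (m : ℝ)) ^ (N - 1) := by
  have he1 : (1:ℝ) < Real.exp 1 := by have := Real.exp_one_gt_d9; linarith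
  have hM2 : (2:ℝ) ≤ (m:ℝ) := by exact_mod_cast hm2
  set M : ℝ := (m : ℝ) with hM
  have hM0 : (0:ℝ) < M := by linarith
  set q : ℝ := 1 - 1 / M with hqdef
  have hq0 : 0 ≤ q := by
    rw [hqdef, sub_nonneg, div_le_one hM0]; linarith
  have hq1 : q ≤ 1 := by
    rw [hqdef]; have : 0 < 1 / M := by positivity
    linarith
  set j : ℕ := 2 * m - 1 - N with hjdef
  have hjcast : (j : ℝ) = 2 * M - 1 - N := by
    rw [hjdef, hM]
    push_cast [Nat.cast_sub (by omega : N ≤ 2*m-1), Nat.cast_sub (by omega : 1 ≤ 2*m)]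
    ring
  have hbern : (1:ℝ) + j * (1 / M) ≤ (1 + 1 / M) ^ j := by
    have hg : (-2:ℝ) ≤ 1 / M := by
      have : (0:ℝ) ≤ 1/M := by positivity
      linarith
    have := one_add_mul_le_pow hg j
    linarith [this]
  have hprod : q ^ j * (1 + 1 / M) ^ j ≤ 1 := by
    rw [← mul_pow]
    have hbase : q * (1 + 1 / M) = 1 - (1/M)^2 := by rw [hqdef]; ring
    have hb0 : 0 ≤ q * (1 + 1/M) := by
      rw [hbase]
      have : (1/M)^2 ≤ (1/2)^2 := by
        apply pow_le_pow_left₀ (by positivity)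
        rw [div_le_div_iff₀ hM0 (by norm_num)]; linarith
      nlinarith
    have hb1 : q * (1 + 1/M) ≤ 1 := by
      rw [hbase]; nlinarith [sq_nonneg (1/M)]
    exact pow_le_one₀ hb0 hb1
  have hqjpos : 0 ≤ q ^ j := pow_nonneg hq0 j
  have hkey : (2 * M - 1) * q ^ j ≤ N := by
    have hNR : M ≤ (N:ℝ) := by rw [hM]; exact_mod_cast hmN
    have hquad : (2 * M - 1) ≤ N * (1 + j * (1/M)) := by
      rw [hjcast]
      have hjnn : (0:ℝ) ≤ 2*M - 1 - N := by rw [← hjcast]; positivity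
      have hNM : (0:ℝ) ≤ (N:ℝ) - M := by linarith
      have hexp : (N:ℝ) * (1 + (2*M-1-N) * (1/M)) - (2*M-1)
          = ((N:ℝ) - M) * (2*M - 1 - N) * (1/M) := by
        field_simp; ring
      nlinarith [mul_nonneg (mul_nonneg hNM hjnn) (by positivity : (0:ℝ) ≤ 1/M)]
    calc (2 * M - 1) * q ^ j ≤ (N * (1 + j * (1/M))) * q ^ j := by
          apply mul_le_mul_of_nonneg_right hquad hqjpos
    _ = N * ((1 + j * (1/M)) * q ^ j) := by ring
    _ ≤ N * 1 := by
          apply mul_le_mul_of_nonneg_left _ (by positivity)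
          calc (1 + j * (1/M)) * q ^ j ≤ (1 + 1/M)^j * q ^ j := by
                apply mul_le_mul_of_nonneg_right hbern hqjpos
          _ ≤ 1 := by rw [mul_comm]; exact hprod
    _ = N := by ring
  have hexps : (N - 1) + j = 2 * m - 2 := by omega
  have hstep1 : (2 * M - 1) * q ^ (2 * m - 2) ≤ (N:ℝ) * q ^ (N - 1) := by
    rw [← hexps, pow_add]
    calc (2 * M - 1) * (q ^ (N-1) * q ^ j)
        = ((2 * M - 1) * q ^ j) * q ^ (N-1) := by ring
      _ ≤ (N:ℝ) * q ^ (N-1) := by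
          apply mul_le_mul_of_nonneg_right hkey (pow_nonneg hq0 _)
  have hqexp : Real.exp (-1) ≤ q ^ (m - 1) := by
    have hM1 : (0:ℝ) < M - 1 := by linarith
    have h1 : 1 + 1/(M-1) ≤ Real.exp (1/(M-1)) := by
      have := Real.add_one_le_exp (1/(M-1)); linarith
    have h2 : Real.exp (-(1/(M-1))) ≤ q := by
      rw [Real.exp_neg, hqdef, inv_le_iff_one_le_mul₀ (Real.exp_pos _)]
      have heq : (1 - 1/M) * (1 + 1/(M-1)) = 1 := by field_simp; ring
      calc (1:ℝ) = (1 - 1/M) * (1 + 1/(M-1)) := heq.symm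
        _ ≤ (1 - 1/M) * Real.exp (1/(M-1)) := by
            apply mul_le_mul_of_nonneg_left h1 (by rw [hqdef] at hq0; exact hq0)
    calc Real.exp (-1) = Real.exp (-(1/(M-1))) ^ (m-1) := by
          rw [← Real.exp_nat_mul]
          congr 1
          have hc : ((m-1 : ℕ) : ℝ) = M - 1 := by
            rw [hM, Nat.cast_sub (by omega)]; norm_num
          rw [hc]; field_simp
      _ ≤ q ^ (m-1) := pow_le_pow_left₀ (le_of_lt (Real.exp_pos _)) h2 _
  have hq2m : Real.exp (-1) ^ 2 ≤ q ^ (2 * m - 2) := by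
    have h22 : 2 * m - 2 = 2 * (m - 1) := by omega
    rw [h22, mul_comm, pow_mul]
    exact pow_le_pow_left₀ (le_of_lt (Real.exp_pos _)) hqexp 2
  have hfinal : 1 / (2 * Real.exp 1) ≤ (1 / M) * ((2 * M - 1) * q ^ (2 * m - 2)) := by
    have h32 : (3/2 : ℝ) ≤ (1/M) * (2*M - 1) := by
      rw [one_div, inv_mul_eq_div, le_div_iff₀ hM0]; linarith
    have he3 : Real.exp 1 ≤ 3 := by have := Real.exp_one_lt_d9; linarith
    have hp := Real.exp_pos 1
    have hge : 1 / (2 * Real.exp 1) ≤ (3/2) * Real.exp (-1) ^ 2 := by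
      rw [Real.exp_neg, div_le_iff₀ (by positivity : (0:ℝ) < 2 * Real.exp 1)]
      have heq : (3/2) * ((Real.exp 1)⁻¹)^2 * (2 * Real.exp 1)
          = 3 * (Real.exp 1)⁻¹ * ((Real.exp 1)⁻¹ * Real.exp 1) := by ring
      rw [heq, inv_mul_cancel₀ (ne_of_gt hp), mul_one, ← div_eq_mul_inv,
        le_div_iff₀ hp]
      linarith
    calc 1 / (2 * Real.exp 1) ≤ (3/2) * Real.exp (-1) ^ 2 := hge
      _ ≤ ((1/M) * (2*M-1)) * (Real.exp (-1) ^ 2) := by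
          apply mul_le_mul_of_nonneg_right h32 (by positivity)
      _ ≤ ((1/M) * (2*M-1)) * q ^ (2*m-2) := by
          apply mul_le_mul_of_nonneg_left hq2m
          nlinarith
      _ = (1 / M) * ((2 * M - 1) * q ^ (2 * m - 2)) := by ring
  calc 1 / (2 * Real.exp 1) ≤ (1 / M) * ((2 * M - 1) * q ^ (2 * m - 2)) := hfinal
    _ ≤ (1 / M) * ((N:ℝ) * q ^ (N - 1)) := by
        apply mul_le_mul_of_nonneg_left hstep1 (by positivity)
    _ = (N : ℝ) * (1 / M) * q ^ (N - 1) := by ring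

/-- Let `E'` be a nonempty finite set of `N` edges, and suppose each edge is included
in a random subset `E_i` independently with probability `2^{-i}` where
`i = ⌊log₂ N⌋`.  Then `Pr[|E' ∩ E_i| = 1] = N · 2^{-i} · (1 - 2^{-i})^{N-1}` is at
least the positive absolute constant `1/(2e)`. -/
theorem stmt10 (N : ℕ) (hN : 1 ≤ N) :
    1 / (2 * Real.exp 1) ≤
      (N : ℝ) * (1 / 2 ^ Nat.log 2 N) * (1 - 1 / 2 ^ Nat.log 2 N) ^ (N - 1) := by
  have he1 : (1:ℝ) < Real.exp 1 := by have := Real.exp_one_gt_d9; linarith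
  rcases eq_or_lt_of_le hN with h1 | h2
  · subst_vars
    simp [Nat.log_one_right]
    have h0 : (0:ℝ) < (Real.exp 1)⁻¹ := by positivity
    have h1 : (Real.exp 1)⁻¹ ≤ 1 := by
      rw [inv_le_one_iff₀]; right; linarith
    nlinarith
  · have hN2 : 2 ≤ N := h2
    have hi1 : 1 ≤ Nat.log 2 N := Nat.log_pos (by norm_num) hN2
    have hm2 : 2 ≤ 2 ^ Nat.log 2 N := by
      calc 2 = 2 ^ 1 := rfl
      _ ≤ 2 ^ Nat.log 2 N := Nat.pow_le_pow_right (by norm_num) hi1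
    have hmN : 2 ^ Nat.log 2 N ≤ N := Nat.pow_log_le_self 2 (by omega)
    have hNlt : N < 2 * 2 ^ Nat.log 2 N := by
      have := Nat.lt_pow_succ_log_self (b := 2) (by norm_num) N
      rw [pow_succ, mul_comm] at this
      exact this
    have := stmt10_aux (2 ^ Nat.log 2 N) N hm2 hmN (by omega)
    have hc : ((2 ^ Nat.log 2 N : ℕ) : ℝ) = (2:ℝ) ^ Nat.log 2 N := by push_cast; ring
    rwa [hc] at this
end

section
/- If {u,v} is an edge of G with u ∈ V(γ) and v ∈ V(γ') for components γ ∈ C_i and γ' ∈ C_{i'} of the hierarchy, then γ and γ' are related by the ancestor relation: V(γ) ⊆ V(γ') or V(γ') ⊆ V(γ) (w.l.o.g. taking i ≤ i', V(γ) ⊆ V(γ'')). Equivalently, no graph edge joins two unrelated components of the hierarchy. -/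
/-- Key lemma: if `s ⊆ t`, `u ∈ c` (a component of `G[s]`), `v ∈ c'` (a component
of `G[t]`), and `u` is adjacent to `v`, then the image of `c` is contained in that
of `c'`. -/
lemma stmt18_aux {V : Type*} (G : SimpleGraph V) (s t : Set V) (hst : s ⊆ t)
    (c : (G.induce s).ConnectedComponent) (c' : (G.induce t).ConnectedComponent)
    (u v : V) (huv : G.Adj u v)
    (hu : u ∈ Subtype.val '' c.supp) (hv : v ∈ Subtype.val '' c'.supp) :
    Subtype.val '' c.supp ⊆ Subtype.val '' c'.supp := by
  obtain ⟨⟨u', hus⟩, hc, rfl⟩ := hu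
  obtain ⟨⟨v', hvt⟩, hc', rfl⟩ := hv
  rintro x ⟨⟨x', hxs⟩, hx, rfl⟩
  refine ⟨⟨x', hst hxs⟩, ?_, rfl⟩
  rw [SimpleGraph.ConnectedComponent.mem_supp_iff] at hx hc hc' ⊢
  have hreach_s : (G.induce s).Reachable ⟨x', hxs⟩ ⟨u', hus⟩ :=
    SimpleGraph.ConnectedComponent.exact (hx.trans hc.symm)
  have hreach_t : (G.induce t).Reachable ⟨x', hst hxs⟩ ⟨u', hst hus⟩ :=
    hreach_s.map ((⟨fun a => ⟨a.1, hst a.2⟩, fun h => h⟩ : G.induce s →g G.induce t))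
  have hadj : (G.induce t).Adj ⟨u', hst hus⟩ ⟨v', hvt⟩ := huv
  have : (G.induce t).Reachable ⟨x', hst hxs⟩ ⟨v', hvt⟩ :=
    hreach_t.trans hadj.reachable
  rw [← hc']
  exact SimpleGraph.ConnectedComponent.sound this

/-- If `{u,v}` is an edge of `G` with `u ∈ V(γ)` and `v ∈ V(γ')` for components
`γ ∈ C_i` and `γ' ∈ C_{i'}` of the hierarchy, then `γ` and `γ'` are related by the
ancestor relation: `V(γ) ⊆ V(γ')` or `V(γ') ⊆ V(γ)`.  Equivalently, no graph edge
joins two unrelated components of the hierarchy. -/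
theorem stmt18 {V : Type*} (G : SimpleGraph V) (B : ℕ → Set V) (p i i' : ℕ)
    (u v : V) (huv : G.Adj u v)
    (c : (G.induce {x : V | ∀ j ∈ Set.Ico i p, x ∉ B j}).ConnectedComponent)
    (c' : (G.induce {x : V | ∀ j ∈ Set.Ico i' p, x ∉ B j}).ConnectedComponent)
    (hu : u ∈ Subtype.val '' c.supp) (hv : v ∈ Subtype.val '' c'.supp) :
    Subtype.val '' c.supp ⊆ Subtype.val '' c'.supp ∨
    Subtype.val '' c'.supp ⊆ Subtype.val '' c.supp := by
  rcases le_total i i' with h | h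
  · left
    refine stmt18_aux G _ _ ?_ c c' u v huv hu hv
    intro x hx j hj
    exact hx j ⟨le_trans h hj.1, hj.2⟩
  · right
    refine stmt18_aux G _ _ ?_ c' c v u huv.symm hv hu
    intro x hx j hj
    exact hx j ⟨le_trans h hj.1, hj.2⟩
end
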